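/- arXiv:2503.05140 — 4 statements merged into one kernel-verified Lean document; each statement's English description precedes it below -/
import Mathlib

section
/- Let N ∈ ℕ with N ≥ 2 and let γ satisfy the curve hypotheses with parameter N, with constants C₁⁽¹⁾, C₁⁽²⁾ and C₂⁽¹⁾,…,C₂⁽ᴺ⁾ as in the hypotheses. For j ∈ ℤ with j ≤ −1 and t ∈ [1/2,2] set Γ_j(t) := γ(2ʲt)/γ(2ʲ). Then, uniformly in j ≤ −1 and t ∈ [1/2,2]: (i) e^{−C₂⁽¹⁾} ≤ Γ_j(t) ≤ e^{C₂⁽¹⁾}; (ii) C₁⁽¹⁾/(2e^{C₂⁽¹⁾}) ≤ |Γ_j′(t)| ≤ 2e^{C₂⁽¹⁾}C₂⁽¹⁾; (iii) C₁⁽²⁾/(4e^{C₂⁽¹⁾}) ≤ |Γ_j″(t)| ≤ 4e^{C₂⁽¹⁾}C₂⁽²⁾; (iv) |Γ_j⁽ᵏ⁾(t)| ≤ 2ᵏ e^{C₂⁽¹⁾} C₂⁽ᵏ⁾ for every integer k with 2 ≤ k ≤ N. -/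
open MeasureTheory Filter Set
open scoped ENNReal NNReal

noncomputable section

/-- The rescaled curve `Γ_j(t) := γ(2ʲ t) / γ(2ʲ)`. -/
def Gam (γ : ℝ → ℝ) (j : ℤ) (t : ℝ) : ℝ := γ ((2 : ℝ) ^ j * t) / γ ((2 : ℝ) ^ j)

/-- Lemma 2.1 (i)-(iv): uniform bounds for `Γ_j` and its derivatives on `[1/2, 2]`,
for `j ≤ -1`, under the curve hypotheses with parameter `N` with constants
`C₁ j` (lower bounds, `j = 1,2`) and `C₂ j` (upper bounds, `j = 1,…,N`). -/
theorem rescaled_curve_bounds (N : ℕ) (hN : 2 ≤ N) (γ : ℝ → ℝ) (C₁ C₂ : ℕ → ℝ)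
    (hsmooth : ContDiffOn ℝ N γ (Set.Ioc 0 1))
    (hlim : Filter.Tendsto γ (nhdsWithin 0 (Set.Ioi 0)) (nhds 0))
    (hmono : MonotoneOn γ (Set.Ioc 0 1) ∨ AntitoneOn γ (Set.Ioc 0 1))
    (hC₁pos : ∀ j : ℕ, 1 ≤ j → j ≤ 2 → 0 < C₁ j)
    (hC₂pos : ∀ j : ℕ, 1 ≤ j → j ≤ N → 0 < C₂ j)
    (hlow : ∀ j : ℕ, 1 ≤ j → j ≤ 2 → ∀ t ∈ Set.Ioc (0 : ℝ) 1,
      C₁ j ≤ |t ^ j * iteratedDerivWithin j γ (Set.Ioc 0 1) t / γ t|)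
    (hup : ∀ j : ℕ, 1 ≤ j → j ≤ N → ∀ t ∈ Set.Ioc (0 : ℝ) 1,
      |t ^ j * iteratedDerivWithin j γ (Set.Ioc 0 1) t / γ t| ≤ C₂ j) :
    ∀ j : ℤ, j ≤ -1 → ∀ t ∈ Set.Icc (1/2 : ℝ) 2,
      (Real.exp (-(C₂ 1)) ≤ Gam γ j t ∧ Gam γ j t ≤ Real.exp (C₂ 1)) ∧
      (C₁ 1 / (2 * Real.exp (C₂ 1)) ≤
          |iteratedDerivWithin 1 (Gam γ j) (Set.Icc (1/2 : ℝ) 2) t| ∧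
        |iteratedDerivWithin 1 (Gam γ j) (Set.Icc (1/2 : ℝ) 2) t| ≤
          2 * Real.exp (C₂ 1) * C₂ 1) ∧
      (C₁ 2 / (4 * Real.exp (C₂ 1)) ≤
          |iteratedDerivWithin 2 (Gam γ j) (Set.Icc (1/2 : ℝ) 2) t| ∧
        |iteratedDerivWithin 2 (Gam γ j) (Set.Icc (1/2 : ℝ) 2) t| ≤
          4 * Real.exp (C₂ 1) * C₂ 2) ∧
      (∀ k : ℕ, 2 ≤ k → k ≤ N →
        |iteratedDerivWithin k (Gam γ j) (Set.Icc (1/2 : ℝ) 2) t| ≤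
          2 ^ k * Real.exp (C₂ 1) * C₂ k) := by
  intro j hj t ht
  set S : Set ℝ := Set.Ioc (0:ℝ) 1 with hSdef
  set I : Set ℝ := Set.Icc (1/2:ℝ) 2 with hIdef
  have uS : UniqueDiffOn ℝ S := uniqueDiffOn_Ioc _ _
  have uI : UniqueDiffOn ℝ I := uniqueDiffOn_Icc (by norm_num)
  have hC1pos : 0 < C₂ 1 := hC₂pos 1 le_rfl (by omega)
  -- γ does not vanish on S
  have hγne : ∀ x ∈ S, γ x ≠ 0 := by
    intro x hx h0
    have h := hlow 1 le_rfl (by norm_num) x hx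
    rw [h0, div_zero, abs_zero] at h
    exact absurd h (not_le.2 (hC₁pos 1 le_rfl (by norm_num)))
  have hcont : ContinuousOn γ S := hsmooth.continuousOn
  -- γ has constant sign on S
  have hsign : ∀ x ∈ S, ∀ y ∈ S, 0 < γ x / γ y := by
    intro x hx y hy
    rcases lt_trichotomy (γ x * γ y) 0 with hneg | h0 | hpos
    · exfalso
      have hsub : Set.uIcc x y ⊆ S := Set.OrdConnected.uIcc_subset Set.ordConnected_Ioc hx hy
      have h0m : (0:ℝ) ∈ Set.uIcc (γ x) (γ y) := by
        rcases mul_neg_iff.mp hneg with ⟨h1, h2⟩ | ⟨h1, h2⟩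
        · exact Set.mem_uIcc.2 (Or.inr ⟨h2.le, h1.le⟩)
        · exact Set.mem_uIcc.2 (Or.inl ⟨h1.le, h2.le⟩)
      obtain ⟨z, hz, hz0⟩ := intermediate_value_uIcc (hcont.mono hsub) h0m
      exact hγne z (hsub hz) hz0
    · exfalso
      rcases mul_eq_zero.mp h0 with h | h
      · exact hγne x hx h
      · exact hγne y hy h
    · rcases mul_pos_iff.mp hpos with ⟨h1, h2⟩ | ⟨h1, h2⟩
      · exact div_pos h1 h2
      · exact div_pos_of_neg_of_neg h1 h2
  -- derivative facts on the interior
  have hmemS : ∀ x ∈ Set.Ioo (0:ℝ) 1, S ∈ nhds x := by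
    intro x hx
    exact mem_nhds_iff.2 ⟨Set.Ioo 0 1, Set.Ioo_subset_Ioc_self, isOpen_Ioo, hx⟩
  have hdiffγ : DifferentiableOn ℝ γ S :=
    hsmooth.differentiableOn (by exact_mod_cast (by omega : N ≠ 0))
  have hderiv_at : ∀ x ∈ Set.Ioo (0:ℝ) 1, HasDerivAt γ (deriv γ x) x := by
    intro x hx
    exact ((hdiffγ x (Set.Ioo_subset_Ioc_self hx)).differentiableAt (hmemS x hx)).hasDerivAt
  have hratio : ∀ x ∈ Set.Ioo (0:ℝ) 1, |deriv γ x / γ x| ≤ C₂ 1 / x := by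
    intro x hx
    have hxS : x ∈ S := Set.Ioo_subset_Ioc_self hx
    have h := hup 1 le_rfl (by omega) x hxS
    rw [iteratedDerivWithin_one, derivWithin_of_mem_nhds (hmemS x hx), pow_one,
      mul_div_assoc, abs_mul, abs_of_pos hx.1] at h
    rw [le_div_iff₀ hx.1]
    linarith [h]
  -- log-derivative monotone comparison
  have hmono2 : ∀ ε : ℝ, ε = 1 ∨ ε = -1 →
      MonotoneOn (fun x => C₂ 1 * Real.log x - ε * Real.log (γ x)) S := by
    intro ε hε
    have hεabs : |ε| = 1 := by rcases hε with h | h <;> simp [h]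
    have hφ : ∀ x ∈ Set.Ioo (0:ℝ) 1,
        HasDerivAt (fun x => C₂ 1 * Real.log x - ε * Real.log (γ x))
          (C₂ 1 * x⁻¹ - ε * (deriv γ x / γ x)) x := by
      intro x hx
      have h1 : HasDerivAt (fun x : ℝ => C₂ 1 * Real.log x) (C₂ 1 * x⁻¹) x :=
        (Real.hasDerivAt_log (ne_of_gt hx.1)).const_mul (C₂ 1)
      have h2 : HasDerivAt (fun x => ε * Real.log (γ x)) (ε * (deriv γ x / γ x)) x :=
        ((hderiv_at x hx).log (hγne x (Set.Ioo_subset_Ioc_self hx))).const_mul ε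
      exact h1.sub h2
    apply monotoneOn_of_deriv_nonneg (convex_Ioc _ _)
    · exact (continuousOn_const.mul
        (Real.continuousOn_log.mono (fun x hx => by
          simp only [Set.mem_compl_iff, Set.mem_singleton_iff]
          exact ne_of_gt hx.1))).sub
        (continuousOn_const.mul (hcont.log hγne))
    · rw [interior_Ioc]
      intro x hx
      exact (hφ x hx).differentiableAt.differentiableWithinAt
    · rw [interior_Ioc]
      intro x hx
      rw [(hφ x hx).deriv]
      have h3 := hratio x hx
      have h4 : ε * (deriv γ x / γ x) ≤ C₂ 1 / x := by
        calc ε * (deriv γ x / γ x) ≤ |ε * (deriv γ x / γ x)| := le_abs_self _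
          _ = |deriv γ x / γ x| := by rw [abs_mul, hεabs, one_mul]
          _ ≤ C₂ 1 / x := h3
      rw [sub_nonneg, ← div_eq_mul_inv]
      exact h4
  have hlog : ∀ a ∈ S, ∀ b ∈ S, a ≤ b →
      |Real.log (γ b) - Real.log (γ a)| ≤ C₂ 1 * (Real.log b - Real.log a) := by
    intro a ha b hb hab
    have h1 := hmono2 1 (Or.inl rfl) ha hb hab
    have h2 := hmono2 (-1) (Or.inr rfl) ha hb hab
    simp only [one_mul, neg_one_mul, sub_neg_eq_add] at h1 h2
    rw [abs_le]
    constructor <;> linarith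
  -- basic positivity for 2^j and membership
  have hc : (0:ℝ) < (2:ℝ) ^ j := by positivity
  have hcle : (2:ℝ) ^ j ≤ 1/2 := by
    have := zpow_le_zpow_right₀ (by norm_num : (1:ℝ) ≤ 2) hj
    simpa using this
  have ht0 : (0:ℝ) < t := lt_of_lt_of_le (by norm_num) ht.1
  have hcS : (2:ℝ) ^ j ∈ S := ⟨hc, by linarith⟩
  have hmaps : Set.MapsTo (fun s : ℝ => (2:ℝ) ^ j * s) I S := by
    intro u hu
    have hu1 : (1/2:ℝ) ≤ u := hu.1
    have hu2 : u ≤ 2 := hu.2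
    have hu0 : (0:ℝ) < u := by linarith
    refine ⟨mul_pos hc hu0, ?_⟩
    calc (2:ℝ) ^ j * u ≤ (1/2) * 2 := mul_le_mul hcle hu2 hu0.le (by norm_num)
      _ = 1 := by norm_num
  have hsS : (2:ℝ) ^ j * t ∈ S := hmaps ht
  have hγcne : γ ((2:ℝ) ^ j) ≠ 0 := hγne _ hcS
  have hγsne : γ ((2:ℝ) ^ j * t) ≠ 0 := hγne _ hsS
  -- the Gamma value bounds (part i)
  have hGpos : 0 < Gam γ j t := hsign _ hsS _ hcS
  have hGabs : Gam γ j t = |γ ((2:ℝ) ^ j * t)| / |γ ((2:ℝ) ^ j)| := by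
    rw [← abs_div]
    exact (abs_of_pos hGpos).symm
  have hls : Real.log ((2:ℝ) ^ j * t) = Real.log ((2:ℝ) ^ j) + Real.log t :=
    Real.log_mul (ne_of_gt hc) (ne_of_gt ht0)
  have hlog2 : Real.log 2 < 1 := by
    have := Real.log_two_lt_d9; linarith
  have hlt_ub : Real.log t ≤ Real.log 2 := Real.log_le_log ht0 ht.2
  have hlt_lb : -Real.log 2 ≤ Real.log t := by
    have h := Real.log_le_log (by norm_num : (0:ℝ) < 1/2) ht.1
    rw [show (1/2:ℝ) = 2⁻¹ by norm_num, Real.log_inv] at h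
    exact h
  have hL : |Real.log (γ ((2:ℝ) ^ j * t)) - Real.log (γ ((2:ℝ) ^ j))| ≤ C₂ 1 := by
    rcases le_total ((2:ℝ) ^ j * t) ((2:ℝ) ^ j) with hst | hst
    · have h := hlog _ hsS _ hcS hst
      have h5 : C₂ 1 * (Real.log ((2:ℝ) ^ j) - Real.log ((2:ℝ) ^ j * t)) ≤ C₂ 1 * 1 :=
        mul_le_mul_of_nonneg_left (by rw [hls]; linarith) hC1pos.le
      rw [abs_sub_comm]
      linarith
    · have h := hlog _ hcS _ hsS hst
      have h5 : C₂ 1 * (Real.log ((2:ℝ) ^ j * t) - Real.log ((2:ℝ) ^ j)) ≤ C₂ 1 * 1 :=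
        mul_le_mul_of_nonneg_left (by rw [hls]; linarith) hC1pos.le
      linarith
  have hGexp : Gam γ j t =
      Real.exp (Real.log (γ ((2:ℝ) ^ j * t)) - Real.log (γ ((2:ℝ) ^ j))) := by
    rw [Real.exp_sub, ← Real.log_abs (γ ((2:ℝ) ^ j * t)), ← Real.log_abs (γ ((2:ℝ) ^ j)),
      Real.exp_log (abs_pos.2 hγsne), Real.exp_log (abs_pos.2 hγcne), hGabs]
  have hGlow : Real.exp (-(C₂ 1)) ≤ Gam γ j t := by
    rw [hGexp]
    exact Real.exp_le_exp.2 (by linarith [(abs_le.mp hL).1])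
  have hGup : Gam γ j t ≤ Real.exp (C₂ 1) := by
    rw [hGexp]
    exact Real.exp_le_exp.2 (abs_le.mp hL).2
  -- key formula for iterated derivatives of Gam
  have hkey : ∀ k : ℕ, k ≤ N → ∀ u ∈ I, iteratedDerivWithin k (Gam γ j) I u
      = ((2:ℝ) ^ j) ^ k * iteratedDerivWithin k γ S ((2:ℝ) ^ j * u) / γ ((2:ℝ) ^ j) := by
    intro k
    induction k with
    | zero => intro _ u hu; simp [Gam]
    | succ k ih =>
      intro hk u hu
      have hk' : k ≤ N := Nat.le_of_succ_le hk
      rw [iteratedDerivWithin_succ]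
      have heq : Set.EqOn (iteratedDerivWithin k (Gam γ j) I)
          (fun s => ((2:ℝ) ^ j) ^ k / γ ((2:ℝ) ^ j) * iteratedDerivWithin k γ S ((2:ℝ) ^ j * s))
          I := by
        intro v hv
        rw [ih hk' v hv]
        ring
      rw [derivWithin_congr heq (heq hu)]
      have hdF : DifferentiableOn ℝ (iteratedDerivWithin k γ S) S :=
        hsmooth.differentiableOn_iteratedDerivWithin (by exact_mod_cast hk) uS
      have hF : HasDerivWithinAt (iteratedDerivWithin k γ S)
          (derivWithin (iteratedDerivWithin k γ S) S ((2:ℝ) ^ j * u)) S ((2:ℝ) ^ j * u) :=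
        (hdF _ (hmaps hu)).hasDerivWithinAt
      have hlin : HasDerivWithinAt (fun s : ℝ => (2:ℝ) ^ j * s) ((2:ℝ) ^ j) I u := by
        simpa using ((hasDerivAt_id u).const_mul ((2:ℝ) ^ j)).hasDerivWithinAt
      have hcomp := hF.comp u hlin hmaps
      have hfinal := hcomp.const_mul (((2:ℝ) ^ j) ^ k / γ ((2:ℝ) ^ j))
      have hd : derivWithin
          (fun s => ((2:ℝ) ^ j) ^ k / γ ((2:ℝ) ^ j) * iteratedDerivWithin k γ S ((2:ℝ) ^ j * s))
          I u = ((2:ℝ) ^ j) ^ k / γ ((2:ℝ) ^ j)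
            * (derivWithin (iteratedDerivWithin k γ S) S ((2:ℝ) ^ j * u) * (2:ℝ) ^ j) :=
        hfinal.derivWithin (uI u hu)
      rw [hd, iteratedDerivWithin_succ]
      ring
  -- |Γ_j^{(k)}(t)| in terms of the scale-invariant ratio
  have habs : ∀ k : ℕ, k ≤ N →
      |iteratedDerivWithin k (Gam γ j) I t|
        = |((2:ℝ) ^ j * t) ^ k * iteratedDerivWithin k γ S ((2:ℝ) ^ j * t) / γ ((2:ℝ) ^ j * t)|
            * Gam γ j t / t ^ k := by
    intro k hk
    rw [hkey k hk t ht, hGabs]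
    rw [abs_div, abs_mul, abs_pow, abs_div, abs_mul, abs_pow, abs_mul,
      abs_of_pos hc, abs_of_pos ht0]
    have h1 : |γ ((2:ℝ) ^ j * t)| ≠ 0 := abs_ne_zero.2 hγsne
    have h2 : |γ ((2:ℝ) ^ j)| ≠ 0 := abs_ne_zero.2 hγcne
    have h3 : t ^ k ≠ 0 := pow_ne_zero k (ne_of_gt ht0)
    field_simp
    ring
  have hGnn : 0 ≤ Gam γ j t := hGpos.le
  -- general upper bound
  have hup' : ∀ k : ℕ, 1 ≤ k → k ≤ N →
      |iteratedDerivWithin k (Gam γ j) I t| ≤ 2 ^ k * Real.exp (C₂ 1) * C₂ k := by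
    intro k h1k hkN
    rw [habs k hkN]
    have hR := hup k h1k hkN _ hsS
    have htk : (0:ℝ) < t ^ k := pow_pos ht0 k
    have h3 : (t ^ k)⁻¹ ≤ 2 ^ k := by
      have h4 : (1:ℝ) ≤ 2 ^ k * t ^ k := by
        have h5 : ((2:ℝ) * 2⁻¹) ^ k = 1 := by norm_num
        calc (1:ℝ) = ((2:ℝ) * 2⁻¹) ^ k := h5.symm
          _ = 2 ^ k * (2⁻¹) ^ k := mul_pow _ _ _
          _ ≤ 2 ^ k * t ^ k := by
              have : ((2:ℝ)⁻¹) ^ k ≤ t ^ k :=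
                pow_le_pow_left₀ (by norm_num) (by linarith [ht.1]) k
              nlinarith [pow_pos (by norm_num : (0:ℝ) < 2) k]
      calc (t ^ k)⁻¹ ≤ (t ^ k)⁻¹ * (2 ^ k * t ^ k) :=
            le_mul_of_one_le_right (by positivity) h4
        _ = 2 ^ k := by field_simp
    calc |((2:ℝ) ^ j * t) ^ k * iteratedDerivWithin k γ S ((2:ℝ) ^ j * t) / γ ((2:ℝ) ^ j * t)|
          * Gam γ j t / t ^ k
        = |((2:ℝ) ^ j * t) ^ k * iteratedDerivWithin k γ S ((2:ℝ) ^ j * t) / γ ((2:ℝ) ^ j * t)|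
          * Gam γ j t * (t ^ k)⁻¹ := div_eq_mul_inv _ _
      _ ≤ C₂ k * Real.exp (C₂ 1) * 2 ^ k := by
          have hCk : 0 ≤ C₂ k := (hC₂pos k h1k hkN).le
          exact mul_le_mul (mul_le_mul hR hGup hGnn hCk) h3 (by positivity)
            (mul_nonneg hCk (Real.exp_pos _).le)
      _ = 2 ^ k * Real.exp (C₂ 1) * C₂ k := by ring
  -- lower bound for k = 1, 2
  have hlow' : ∀ k : ℕ, 1 ≤ k → k ≤ 2 →
      C₁ k / (2 ^ k * Real.exp (C₂ 1)) ≤ |iteratedDerivWithin k (Gam γ j) I t| := by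
    intro k h1k hk2
    rw [habs k (hk2.trans hN)]
    have hR := hlow k h1k hk2 _ hsS
    have htk : (0:ℝ) < t ^ k := pow_pos ht0 k
    have h3 : ((2:ℝ) ^ k)⁻¹ ≤ (t ^ k)⁻¹ := by
      have h4 : t ^ k ≤ 2 ^ k := pow_le_pow_left₀ ht0.le ht.2 k
      gcongr
    have hexp : Real.exp (-(C₂ 1)) = (Real.exp (C₂ 1))⁻¹ := Real.exp_neg _
    have hGlow' : (Real.exp (C₂ 1))⁻¹ ≤ Gam γ j t := by rw [← hexp]; exact hGlow
    calc C₁ k / (2 ^ k * Real.exp (C₂ 1))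
        = C₁ k * (Real.exp (C₂ 1))⁻¹ * ((2:ℝ) ^ k)⁻¹ := by
          rw [div_eq_mul_inv, mul_inv]
          ring
      _ ≤ |((2:ℝ) ^ j * t) ^ k * iteratedDerivWithin k γ S ((2:ℝ) ^ j * t) / γ ((2:ℝ) ^ j * t)|
          * Gam γ j t * (t ^ k)⁻¹ := by
          have hC1k := hC₁pos k h1k hk2
          refine mul_le_mul (mul_le_mul hR hGlow' (by positivity) (abs_nonneg _)) h3
            (by positivity) (mul_nonneg (abs_nonneg _) hGnn)
      _ = |((2:ℝ) ^ j * t) ^ k * iteratedDerivWithin k γ S ((2:ℝ) ^ j * t) / γ ((2:ℝ) ^ j * t)|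
          * Gam γ j t / t ^ k := (div_eq_mul_inv _ _).symm
  refine ⟨⟨hGlow, hGup⟩, ⟨?_, ?_⟩, ⟨?_, ?_⟩, ?_⟩
  · have h := hlow' 1 le_rfl (by norm_num)
    rwa [pow_one] at h
  · have h := hup' 1 le_rfl (by omega)
    rwa [pow_one] at h
  · have h := hlow' 2 (by norm_num) le_rfl
    norm_num at h
    exact h
  · have h := hup' 2 (by norm_num) hN
    norm_num at h
    exact h
  · intro k h2k hkN
    exact hup' k (by omega) hkN

end
end

section
/- Let N ∈ ℕ with N ≥ 3 and let γ satisfy the curve hypotheses with parameter N. For j ∈ ℤ with j ≤ −1 set Γ_j(t) := γ(2ʲt)/γ(2ʲ) for t ∈ [1/2,2]. Since Γ_j″ is continuous and bounded away from 0 on [1/2,2], the derivative Γ_j′ is strictly monotone on [1/2,2] and hence has an inverse function (Γ_j′)⁻¹ defined on the interval Γ_j′([1/2,2]). Then for every integer k with 0 ≤ k < N there is a constant C, depending only on γ, N and k (but not on j), such that |((Γ_j′)⁻¹)⁽ᵏ⁾(s)| ≤ C for all j ≤ −1 and all s in the interior of Γ_j′([1/2,2]). -/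
open MeasureTheory Filter Set
open scoped ENNReal NNReal

noncomputable section

/-- The curve hypotheses with parameter `N`. -/
def CurveHyp (γ : ℝ → ℝ) (N : ℕ) : Prop :=
  ContDiffOn ℝ N γ (Set.Ioc 0 1) ∧
  Filter.Tendsto γ (nhdsWithin 0 (Set.Ioi 0)) (nhds 0) ∧
  (MonotoneOn γ (Set.Ioc 0 1) ∨ AntitoneOn γ (Set.Ioc 0 1)) ∧
  (∀ j : ℕ, 1 ≤ j → j ≤ 2 → ∃ C : ℝ, 0 < C ∧ ∀ t ∈ Set.Ioc (0 : ℝ) 1,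
    C ≤ |t ^ j * iteratedDerivWithin j γ (Set.Ioc 0 1) t / γ t|) ∧
  (∀ j : ℕ, 1 ≤ j → j ≤ N → ∃ C : ℝ, 0 < C ∧ ∀ t ∈ Set.Ioc (0 : ℝ) 1,
    |t ^ j * iteratedDerivWithin j γ (Set.Ioc 0 1) t / γ t| ≤ C)

/-- `Γ_j'`, the derivative of the rescaled curve on `[1/2,2]`. -/
def GamDeriv (γ : ℝ → ℝ) (j : ℤ) (t : ℝ) : ℝ :=
  derivWithin (Gam γ j) (Set.Icc (1/2 : ℝ) 2) t

private lemma gronwall_ratio {γ dγ : ℝ → ℝ} {K : ℝ} (hK : 0 ≤ K)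
    (hcont : ContinuousOn γ (Set.Ioc 0 1))
    (hderiv : ∀ x ∈ Set.Ioc (0:ℝ) 1, HasDerivWithinAt γ (dγ x) (Set.Ioc 0 1) x)
    (hbound : ∀ x ∈ Set.Ioc (0:ℝ) 1, |dγ x| ≤ K * |γ x| / x) :
    ∀ u v : ℝ, 0 < u → 0 < v → u ≤ 1 → v ≤ 1 → u ≤ 4 * v → v ≤ 4 * u →
      |γ u| ≤ Real.exp (3 * K) * |γ v| := by
  intro u v hu hv hu1 hv1 huv hvu
  rcases le_total v u with hle | hle
  · -- forward: γ on [v, u], start at v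
    have key : ∀ x ∈ Icc v u, ‖γ x‖ ≤ gronwallBound (|γ v|) (K / v) 0 (x - v) := by
      apply norm_le_gronwallBound_of_norm_deriv_right_le
      · exact hcont.mono (fun x hx => ⟨lt_of_lt_of_le hv hx.1, le_trans hx.2 hu1⟩)
      · intro x hx
        have hx1 : x ∈ Set.Ioc (0:ℝ) 1 := ⟨lt_of_lt_of_le hv hx.1, le_trans hx.2.le hu1⟩
        have hmem : Set.Ioc (0:ℝ) 1 ∈ nhds x := Ioc_mem_nhds hx1.1 (lt_of_lt_of_le hx.2 hu1)
        exact ((hderiv x hx1).hasDerivAt hmem).hasDerivWithinAt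
      · simp
      · intro x hx
        have hx1 : x ∈ Set.Ioc (0:ℝ) 1 := ⟨lt_of_lt_of_le hv hx.1, le_trans hx.2.le hu1⟩
        rw [Real.norm_eq_abs, Real.norm_eq_abs, add_zero]
        calc |dγ x| ≤ K * |γ x| / x := hbound x hx1
          _ ≤ K * |γ x| / v := by gcongr; exact hx.1
          _ = K / v * |γ x| := by ring
    have h2 := key u ⟨hle, le_refl u⟩
    rw [gronwallBound_ε0, Real.norm_eq_abs] at h2
    refine le_trans h2 ?_
    rw [mul_comm (Real.exp (3*K)) (|γ v|)]
    refine mul_le_mul_of_nonneg_left (Real.exp_le_exp.2 ?_) (abs_nonneg _)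
    rw [div_mul_eq_mul_div, div_le_iff₀ hv]
    nlinarith
  · -- reversed: h x = γ (u + v - x) on [u, v], start at u with h u = γ v
    have key : ∀ x ∈ Icc u v, ‖γ (u + v - x)‖ ≤ gronwallBound (|γ v|) (K / u) 0 (x - u) := by
      apply norm_le_gronwallBound_of_norm_deriv_right_le
        (f' := fun x => -dγ (u + v - x))
      · refine (hcont.comp ((continuous_const.sub continuous_id).continuousOn) ?_ :
          ContinuousOn (γ ∘ fun x => u + v - x) (Icc u v))
        intro y hy
        simp only [Set.mem_Ioc, id_eq]
        constructor
        · linarith [hy.2]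
        · linarith [hy.1]
      · intro x hx
        simp only [Set.mem_Ico] at hx
        have hrx : u + v - x ∈ Set.Ioc (0:ℝ) 1 := by
          constructor
          · linarith
          · linarith
        have hrd : HasDerivWithinAt (fun x => u + v - x) (-1 : ℝ)
            (Ici x ∩ Iio (u + v)) x := by
          simpa using ((hasDerivAt_id x).const_sub (u+v)).hasDerivWithinAt
            (s := Ici x ∩ Iio (u+v))
        have hmaps : MapsTo (fun x => u + v - x) (Ici x ∩ Iio (u + v)) (Set.Ioc 0 1) := by
          intro y hy
          obtain ⟨hy1, hy2⟩ := hy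
          simp only [Set.mem_Ici] at hy1
          simp only [Set.mem_Iio] at hy2
          constructor
          · simp only; linarith
          · simp only
            have h3 : u + v - y ≤ u + v - x := by linarith
            linarith [hrx.2]
        have hcomp := (hderiv (u + v - x) hrx).comp x hrd hmaps
        have h4 : HasDerivWithinAt (fun y => γ (u + v - y)) (-dγ (u + v - x))
            (Ici x ∩ Iio (u + v)) x := by
          simpa [Function.comp_def, mul_neg_one] using hcomp
        refine h4.mono_of_mem_nhdsWithin ?_
        exact Filter.inter_mem self_mem_nhdsWithin
          (mem_nhdsWithin_of_mem_nhds (Iio_mem_nhds (by linarith)))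
      · simp
      · intro x hx
        simp only [Set.mem_Ico] at hx
        have hrx : u + v - x ∈ Set.Ioc (0:ℝ) 1 := by
          constructor
          · linarith
          · linarith
        rw [Real.norm_eq_abs, Real.norm_eq_abs, add_zero, abs_neg]
        calc |dγ (u + v - x)| ≤ K * |γ (u + v - x)| / (u + v - x) := hbound _ hrx
          _ ≤ K * |γ (u + v - x)| / u := by gcongr; linarith
          _ = K / u * |γ (u + v - x)| := by ring
    have h2 := key v ⟨hle, le_refl v⟩
    rw [gronwallBound_ε0, Real.norm_eq_abs, show u + v - v = u by ring] at h2
    refine le_trans h2 ?_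
    rw [mul_comm (Real.exp (3*K)) (|γ v|)]
    refine mul_le_mul_of_nonneg_left (Real.exp_le_exp.2 ?_) (abs_nonneg _)
    rw [div_mul_eq_mul_div, div_le_iff₀ hu]
    nlinarith
noncomputable section


private lemma two_zpow_pos' (j : ℤ) : (0:ℝ) < 2 ^ j := zpow_pos (by norm_num) j

private lemma two_zpow_le_half {j : ℤ} (hj : j ≤ -1) : (2:ℝ) ^ j ≤ 1/2 := by
  have : (2:ℝ) ^ j ≤ 2 ^ (-1 : ℤ) := by
    apply zpow_le_zpow_right₀ (by norm_num) hj
  simpa using this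
private lemma two_zpow_mul_mem {j : ℤ} (hj : j ≤ -1) {t : ℝ} (ht : 0 < t) (ht2 : t ≤ 2) :
    (2:ℝ) ^ j * t ∈ Set.Ioc (0:ℝ) 1 := by
  constructor
  · positivity
  · have h1 : (2:ℝ) ^ j * t ≤ 2 ^ j * 2 := by
      have := two_zpow_pos' j; nlinarith
    have h2 : (2:ℝ) ^ j * 2 ≤ 1 := by
      have := two_zpow_le_half hj; nlinarith
    linarith

private lemma two_zpow_mul_lt {j : ℤ} (hj : j ≤ -1) {t : ℝ} (ht : 0 < t) (ht2 : t < 2) :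
    (2:ℝ) ^ j * t ∈ Set.Ioo (0:ℝ) 1 := by
  constructor
  · positivity
  · have h1 : (2:ℝ) ^ j * t < 2 ^ j * 2 := by
      have := two_zpow_pos' j; nlinarith
    have h2 : (2:ℝ) ^ j * 2 ≤ 1 := by
      have := two_zpow_le_half hj; nlinarith
    linarith

private lemma gam_contdiffOn {N : ℕ} {γ : ℝ → ℝ} (h : ContDiffOn ℝ N γ (Set.Ioc 0 1))
    {j : ℤ} (hj : j ≤ -1) {s : Set ℝ} (hs : ∀ t ∈ s, 0 < t ∧ t ≤ 2) :
    ContDiffOn ℝ N (Gam γ j) s := by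
  have hinner : ContDiff ℝ N (fun t : ℝ => (2:ℝ) ^ j * t) := contDiff_const.mul contDiff_id
  have hcomp : ContDiffOn ℝ N (fun t => γ ((2:ℝ) ^ j * t)) s := by
    refine h.comp hinner.contDiffOn ?_
    intro t ht
    exact two_zpow_mul_mem hj (hs t ht).1 (hs t ht).2
  exact hcomp.div_const _

private lemma gam_formula {N : ℕ} {γ : ℝ → ℝ} (h : ContDiffOn ℝ N γ (Set.Ioc 0 1))
    {j : ℤ} (hj : j ≤ -1) :
    ∀ m : ℕ, m ≤ N → ∀ t ∈ Set.Ioo (1/4 : ℝ) 2,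
      iteratedDeriv m (Gam γ j) t
        = ((2:ℝ)^j)^m * iteratedDerivWithin m γ (Set.Ioc 0 1) ((2:ℝ)^j * t) / γ ((2:ℝ)^j) := by
  intro m
  induction m with
  | zero =>
    intro _ t ht
    simp [Gam]
  | succ m IH =>
    intro hmN t ht
    have ht0 : (0:ℝ) < t := by linarith [ht.1]
    have hio : Set.Ioo (1/4:ℝ) 2 ∈ nhds t := isOpen_Ioo.mem_nhds ht
    have heq : iteratedDeriv m (Gam γ j)
        =ᶠ[nhds t] fun x => ((2:ℝ)^j)^m / γ ((2:ℝ)^j)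
          * iteratedDerivWithin m γ (Set.Ioc 0 1) ((2:ℝ)^j * x) := by
      filter_upwards [hio] with x hx
      rw [IH (le_trans (Nat.le_succ m) hmN) x hx]
      ring
    rw [iteratedDeriv_succ, heq.deriv_eq]
    have hy : (2:ℝ)^j * t ∈ Set.Ioo (0:ℝ) 1 := two_zpow_mul_lt hj ht0 ht.2
    have hyIoc : (2:ℝ)^j * t ∈ Set.Ioc (0:ℝ) 1 := ⟨hy.1, hy.2.le⟩
    have hnb : Set.Ioc (0:ℝ) 1 ∈ nhds ((2:ℝ)^j * t) := Ioc_mem_nhds hy.1 hy.2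
    have hD : DifferentiableWithinAt ℝ (iteratedDerivWithin m γ (Set.Ioc 0 1))
        (Set.Ioc 0 1) ((2:ℝ)^j * t) := by
      apply h.differentiableOn_iteratedDerivWithin ?_ (uniqueDiffOn_Ioc 0 1) _ hyIoc
      exact_mod_cast Nat.lt_of_succ_le hmN
    have hDa : HasDerivAt (iteratedDerivWithin m γ (Set.Ioc 0 1))
        (iteratedDerivWithin (m+1) γ (Set.Ioc 0 1) ((2:ℝ)^j * t)) ((2:ℝ)^j * t) := by
      have h1 := (hD.differentiableAt hnb).hasDerivAt
      have h2 : iteratedDerivWithin (m+1) γ (Set.Ioc 0 1) ((2:ℝ)^j * t)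
          = deriv (iteratedDerivWithin m γ (Set.Ioc 0 1)) ((2:ℝ)^j * t) := by
        rw [iteratedDerivWithin_succ]
        exact derivWithin_of_mem_nhds hnb
      rw [h2]
      exact h1
    have hinner : HasDerivAt (fun x : ℝ => (2:ℝ)^j * x) ((2:ℝ)^j) t := by
      simpa using (hasDerivAt_id t).const_mul ((2:ℝ)^j)
    have hchain := hDa.comp t hinner
    have hfull := hchain.const_mul (((2:ℝ)^j)^m / γ ((2:ℝ)^j))
    have hfull' : HasDerivAt
        (fun x => ((2:ℝ)^j)^m / γ ((2:ℝ)^j) * iteratedDerivWithin m γ (Set.Ioc 0 1) ((2:ℝ)^j * x))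
        (((2:ℝ)^j)^m / γ ((2:ℝ)^j)
          * (iteratedDerivWithin (m+1) γ (Set.Ioc 0 1) ((2:ℝ)^j * t) * (2:ℝ)^j)) t := hfull
    rw [hfull'.deriv]
    ring

private lemma exists_uniform_upper (N : ℕ) (γ : ℝ → ℝ)
    (hup : ∀ j : ℕ, 1 ≤ j → j ≤ N → ∃ C : ℝ, 0 < C ∧ ∀ t ∈ Set.Ioc (0:ℝ) 1,
      |t ^ j * iteratedDerivWithin j γ (Set.Ioc 0 1) t / γ t| ≤ C) :
    ∃ M : ℝ, 1 ≤ M ∧ ∀ m : ℕ, 1 ≤ m → m ≤ N → ∀ t ∈ Set.Ioc (0:ℝ) 1,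
      |t ^ m * iteratedDerivWithin m γ (Set.Ioc 0 1) t / γ t| ≤ M := by
  have H : ∀ m : ℕ, ∃ C : ℝ, 0 < C ∧ (1 ≤ m → m ≤ N → ∀ t ∈ Set.Ioc (0:ℝ) 1,
      |t ^ m * iteratedDerivWithin m γ (Set.Ioc 0 1) t / γ t| ≤ C) := by
    intro m
    by_cases hm : 1 ≤ m ∧ m ≤ N
    · obtain ⟨C, hC, hb⟩ := hup m hm.1 hm.2
      exact ⟨C, hC, fun _ _ => hb⟩
    · exact ⟨1, one_pos, fun h1 h2 => absurd ⟨h1, h2⟩ hm⟩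
  choose f hf0 hf using H
  refine ⟨1 + ∑ m ∈ Finset.range (N+1), f m, ?_, ?_⟩
  · have : 0 ≤ ∑ m ∈ Finset.range (N+1), f m :=
      Finset.sum_nonneg (fun i _ => (hf0 i).le)
    linarith
  · intro m h1 h2 t ht
    refine le_trans (hf m h1 h2 t ht) ?_
    have := Finset.single_le_sum (f := f) (fun i _ => (hf0 i).le)
      (Finset.mem_range.mpr (by omega : m < N+1))
    linarith

private lemma gam_bounds (N : ℕ) (hN : 3 ≤ N) (γ : ℝ → ℝ)
    (hsm : ContDiffOn ℝ N γ (Set.Ioc 0 1))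
    (hlow : ∀ j : ℕ, 1 ≤ j → j ≤ 2 → ∃ C : ℝ, 0 < C ∧ ∀ t ∈ Set.Ioc (0:ℝ) 1,
      C ≤ |t ^ j * iteratedDerivWithin j γ (Set.Ioc 0 1) t / γ t|)
    (hup : ∀ j : ℕ, 1 ≤ j → j ≤ N → ∃ C : ℝ, 0 < C ∧ ∀ t ∈ Set.Ioc (0:ℝ) 1,
      |t ^ j * iteratedDerivWithin j γ (Set.Ioc 0 1) t / γ t| ≤ C) :
    ∃ c M : ℝ, 0 < c ∧ 2 ≤ M ∧
      (∀ t ∈ Set.Ioc (0:ℝ) 1, γ t ≠ 0) ∧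
      ∀ j : ℤ, j ≤ -1 →
      (∀ m : ℕ, m ≤ N → ∀ t ∈ Set.Ioo (1/2:ℝ) 2, |iteratedDeriv m (Gam γ j) t| ≤ M) ∧
      (∀ t ∈ Set.Ioo (1/2:ℝ) 2, c ≤ |iteratedDeriv 2 (Gam γ j) t|) := by
  have hN1 : (1 : WithTop ℕ∞) ≤ N := by exact_mod_cast Nat.one_le_iff_ne_zero.mpr (by omega)
  -- γ is nonvanishing
  have hne : ∀ t ∈ Set.Ioc (0:ℝ) 1, γ t ≠ 0 := by
    obtain ⟨C, hC, hb⟩ := hlow 1 le_rfl (by norm_num)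
    intro t ht h0
    have := hb t ht
    rw [h0, div_zero, abs_zero] at this
    linarith
  obtain ⟨M₀, hM₀1, hub⟩ := exists_uniform_upper N γ hup
  have hM₀ : 0 < M₀ := lt_of_lt_of_le one_pos hM₀1
  -- the two-point ratio bound
  have hratio : ∀ u v : ℝ, 0 < u → 0 < v → u ≤ 1 → v ≤ 1 → u ≤ 4 * v → v ≤ 4 * u →
      |γ u| ≤ Real.exp (3 * M₀) * |γ v| := by
    apply gronwall_ratio (dγ := fun x => iteratedDerivWithin 1 γ (Set.Ioc 0 1) x)
      hM₀.le hsm.continuousOn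
    · intro x hx
      rw [iteratedDerivWithin_one]
      exact (hsm.differentiableOn (by exact_mod_cast (by omega : N ≠ 0)) x hx).hasDerivWithinAt
    · intro x hx
      have h1 := hub 1 le_rfl (by omega) x hx
      rw [pow_one, abs_div, abs_mul, abs_of_pos hx.1] at h1
      rw [div_le_iff₀ (abs_pos.mpr (hne x hx))] at h1
      rw [le_div_iff₀ hx.1, mul_comm]
      exact h1
  set R := Real.exp (3 * M₀) with hRdef
  have hRpos : 0 < R := Real.exp_pos _
  have hR1 : 1 ≤ R := Real.one_le_exp (by positivity)
  obtain ⟨C₁, hC₁, hlow2⟩ := hlow 2 (by norm_num) le_rfl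
  refine ⟨C₁ / (R * 4), max 2 (M₀ * R * 4 ^ N), by positivity, le_max_left _ _, hne, ?_⟩
  intro j hj
  have hp : (0:ℝ) < 2 ^ j := two_zpow_pos' j
  have hp1 : (2:ℝ) ^ j ≤ 1 := le_trans (two_zpow_le_half hj) (by norm_num)
  have hnep : γ ((2:ℝ)^j) ≠ 0 := hne _ ⟨hp, hp1⟩
  constructor
  · -- upper bounds
    intro m hm t ht
    have ht0 : (0:ℝ) < t := by linarith [ht.1]
    have hu : (2:ℝ)^j * t ∈ Set.Ioc (0:ℝ) 1 := two_zpow_mul_mem hj ht0 ht.2.le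
    have hratio1 : |γ ((2:ℝ)^j * t)| ≤ R * |γ ((2:ℝ)^j)| := by
      apply hratio _ _ hu.1 hp hu.2 hp1
      · nlinarith [hp, ht.1, ht.2]
      · nlinarith [hp, ht.1, ht.2]
    rcases Nat.eq_zero_or_pos m with rfl | hm1
    · rw [iteratedDeriv_zero]
      have : |Gam γ j t| = |γ ((2:ℝ)^j * t)| / |γ ((2:ℝ)^j)| := by
        rw [Gam, abs_div]
      rw [this, div_le_iff₀ (abs_pos.mpr hnep)]
      calc |γ ((2:ℝ)^j * t)| ≤ R * |γ ((2:ℝ)^j)| := hratio1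
        _ ≤ (M₀ * R * 4 ^ N) * |γ ((2:ℝ)^j)| := by
            have h4 : (1:ℝ) ≤ 4 ^ N := one_le_pow₀ (by norm_num)
            have h5 : (1:ℝ) ≤ M₀ * 4 ^ N := by nlinarith
            nlinarith [mul_nonneg hRpos.le (abs_nonneg (γ ((2:ℝ)^j))), h5]
        _ ≤ max 2 (M₀ * R * 4 ^ N) * |γ ((2:ℝ)^j)| :=
            mul_le_mul_of_nonneg_right (le_max_right _ _) (abs_nonneg _)
    · rw [gam_formula hsm hj m hm t ⟨by linarith [ht.1], ht.2⟩]
      have hF1 : ((2:ℝ)^j * t) ^ m * |iteratedDerivWithin m γ (Set.Ioc 0 1) ((2:ℝ)^j * t)|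
          ≤ M₀ * |γ ((2:ℝ)^j * t)| := by
        have h1 := hub m hm1 hm _ hu
        rw [abs_div, abs_mul, abs_pow, abs_of_pos hu.1] at h1
        rw [div_le_iff₀ (abs_pos.mpr (hne _ hu))] at h1
        exact h1
      have hF3 : (1:ℝ) ≤ t ^ m * 4 ^ N := by
        have h1 : ((1:ℝ)/2) ^ N ≤ ((1:ℝ)/2) ^ m :=
          pow_le_pow_of_le_one (by norm_num) (by norm_num) hm
        have h2 : ((1:ℝ)/2) ^ m ≤ t ^ m := pow_le_pow_left₀ (by norm_num) ht.1.le m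
        have h3 : ((1:ℝ)/2) ^ N * 4 ^ N = 2 ^ N := by
          rw [← mul_pow]; norm_num
        have h4 : (1:ℝ) ≤ 2 ^ N := one_le_pow₀ (by norm_num)
        nlinarith [pow_pos (show (0:ℝ) < 4 by norm_num) N]
      have habs : |((2:ℝ)^j)^m * iteratedDerivWithin m γ (Set.Ioc 0 1) ((2:ℝ)^j * t)
            / γ ((2:ℝ)^j)|
          = ((2:ℝ)^j)^m * |iteratedDerivWithin m γ (Set.Ioc 0 1) ((2:ℝ)^j * t)|
            / |γ ((2:ℝ)^j)| := by
        rw [abs_div, abs_mul, abs_pow, abs_of_pos hp]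
      rw [habs, div_le_iff₀ (abs_pos.mpr hnep)]
      have hupow : ((2:ℝ)^j * t) ^ m = ((2:ℝ)^j)^m * t^m := mul_pow _ _ _
      calc ((2:ℝ)^j)^m * |iteratedDerivWithin m γ (Set.Ioc 0 1) ((2:ℝ)^j * t)|
          = (((2:ℝ)^j)^m * |iteratedDerivWithin m γ (Set.Ioc 0 1) ((2:ℝ)^j * t)|) * 1 := by ring
        _ ≤ (((2:ℝ)^j)^m * |iteratedDerivWithin m γ (Set.Ioc 0 1) ((2:ℝ)^j * t)|)
            * (t^m * 4^N) := by
            refine mul_le_mul_of_nonneg_left hF3 (by positivity)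
        _ = (((2:ℝ)^j * t) ^ m * |iteratedDerivWithin m γ (Set.Ioc 0 1) ((2:ℝ)^j * t)|)
            * 4^N := by rw [hupow]; ring
        _ ≤ (M₀ * |γ ((2:ℝ)^j * t)|) * 4^N :=
            mul_le_mul_of_nonneg_right hF1 (by positivity)
        _ ≤ (M₀ * (R * |γ ((2:ℝ)^j)|)) * 4^N :=
            mul_le_mul_of_nonneg_right (mul_le_mul_of_nonneg_left hratio1 hM₀.le) (by positivity)
        _ = (M₀ * R * 4^N) * |γ ((2:ℝ)^j)| := by ring
        _ ≤ max 2 (M₀ * R * 4 ^ N) * |γ ((2:ℝ)^j)| :=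
            mul_le_mul_of_nonneg_right (le_max_right _ _) (abs_nonneg _)
  · -- lower bound on the second derivative
    intro t ht
    have ht0 : (0:ℝ) < t := by linarith [ht.1]
    have hu : (2:ℝ)^j * t ∈ Set.Ioc (0:ℝ) 1 := two_zpow_mul_mem hj ht0 ht.2.le
    have hratio2 : |γ ((2:ℝ)^j)| ≤ R * |γ ((2:ℝ)^j * t)| := by
      apply hratio _ _ hp hu.1 hp1 hu.2
      · nlinarith [hp, ht.1, ht.2]
      · nlinarith [hp, ht.1, ht.2]
    rw [gam_formula hsm hj 2 (by omega) t ⟨by linarith [ht.1], ht.2⟩]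
    have habs : |((2:ℝ)^j)^2 * iteratedDerivWithin 2 γ (Set.Ioc 0 1) ((2:ℝ)^j * t)
          / γ ((2:ℝ)^j)|
        = ((2:ℝ)^j)^2 * |iteratedDerivWithin 2 γ (Set.Ioc 0 1) ((2:ℝ)^j * t)|
          / |γ ((2:ℝ)^j)| := by
      rw [abs_div, abs_mul, abs_pow, abs_of_pos hp]
    rw [habs, le_div_iff₀ (abs_pos.mpr hnep)]
    have hG1 : C₁ * |γ ((2:ℝ)^j * t)|
        ≤ ((2:ℝ)^j * t) ^ 2 * |iteratedDerivWithin 2 γ (Set.Ioc 0 1) ((2:ℝ)^j * t)| := by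
      have h1 := hlow2 _ hu
      rw [abs_div, abs_mul, abs_pow, abs_of_pos hu.1] at h1
      rw [le_div_iff₀ (abs_pos.mpr (hne _ hu))] at h1
      exact h1
    have hupow : ((2:ℝ)^j * t) ^ 2 = ((2:ℝ)^j)^2 * t^2 := mul_pow _ _ _
    have ht4 : t ^ 2 ≤ 4 := by nlinarith [ht.2]
    rw [div_mul_eq_mul_div, div_le_iff₀ (by positivity : (0:ℝ) < R * 4)]
    calc C₁ * |γ ((2:ℝ)^j)| ≤ C₁ * (R * |γ ((2:ℝ)^j * t)|) :=
        mul_le_mul_of_nonneg_left hratio2 hC₁.le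
      _ = R * (C₁ * |γ ((2:ℝ)^j * t)|) := by ring
      _ ≤ R * (((2:ℝ)^j * t) ^ 2 * |iteratedDerivWithin 2 γ (Set.Ioc 0 1) ((2:ℝ)^j * t)|) :=
        mul_le_mul_of_nonneg_left hG1 hRpos.le
      _ = (R * (((2:ℝ)^j)^2 * |iteratedDerivWithin 2 γ (Set.Ioc 0 1) ((2:ℝ)^j * t)|)) * t^2 := by
        rw [hupow]; ring
      _ ≤ (R * (((2:ℝ)^j)^2 * |iteratedDerivWithin 2 γ (Set.Ioc 0 1) ((2:ℝ)^j * t)|)) * 4 :=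
        mul_le_mul_of_nonneg_left ht4 (by positivity)
      _ = ((2:ℝ)^j)^2 * |iteratedDerivWithin 2 γ (Set.Ioc 0 1) ((2:ℝ)^j * t)| * (R * 4) := by
        ring

private lemma inv_iter_bound (n : ℕ) (c M : ℝ) (hc : 0 < c) (hM : 2 ≤ M) :
    ∀ k : ℕ, ∃ C : ℝ, 0 < C ∧ ∀ (φ g : ℝ → ℝ) (U V : Set ℝ),
      IsOpen U → IsOpen V → ContDiffOn ℝ n φ U →
      (∀ m : ℕ, 1 ≤ m → m ≤ n → ∀ x ∈ U, |iteratedDerivWithin m φ U x| ≤ M) →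
      (∀ x ∈ U, c ≤ |derivWithin φ U x|) →
      (∀ s ∈ V, g s ∈ U) → (∀ s ∈ V, φ (g s) = s) → ContinuousOn g V →
      (∀ s ∈ V, |g s| ≤ M) →
      ∀ i : ℕ, i ≤ k → i ≤ n → ∀ s ∈ V, |iteratedDerivWithin i g V s| ≤ C := by
  intro k
  induction k with
  | zero =>
    refine ⟨M, by linarith, ?_⟩
    intro φ g U V _ _ _ _ _ _ _ _ hgM i hik _ s hs
    rw [Nat.le_zero.mp hik]
    simpa using hgM s hs
  | succ k IH =>
    obtain ⟨C0, hC0, hIH⟩ := IH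
    have hmax1 : (0:ℝ) < max c⁻¹ 1 := lt_of_lt_of_le one_pos (le_max_right _ _)
    set Cinv := (k.factorial : ℝ) * (max c⁻¹ 1) ^ (k+1) with hCinv
    set Cu := (k.factorial : ℝ) * Cinv * M ^ k with hCu
    set Cfin := (k.factorial : ℝ) * Cu * (C0+1) ^ k with hCfin
    have hCinv_pos : 0 < Cinv := by
      rw [hCinv]; positivity
    have hCu_pos : 0 < Cu := by
      rw [hCu]; positivity
    refine ⟨max C0 Cfin, lt_of_lt_of_le hC0 (le_max_left _ _), ?_⟩
    intro φ g U V hUo hVo hφ hφM hφc hgU hφg hgc hgM i hik hin s hs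
    by_cases hik' : i ≤ k
    · exact le_trans (hIH φ g U V hUo hVo hφ hφM hφc hgU hφg hgc hgM i hik' hin s hs)
        (le_max_left _ _)
    have hieq : i = k + 1 := by omega
    subst hieq
    have hUuniq : UniqueDiffOn ℝ U := hUo.uniqueDiffOn
    have hVuniq : UniqueDiffOn ℝ V := hVo.uniqueDiffOn
    have hn1 : 1 ≤ n := by omega
    have hφ'ne : ∀ x ∈ U, derivWithin φ U x ≠ 0 := by
      intro x hx h0
      have := hφc x hx
      rw [h0, abs_zero] at this
      linarith
    have hgderiv : ∀ s ∈ V, HasDerivAt g (derivWithin φ U (g s))⁻¹ s := by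
      intro s hs
      have hgU' := hgU s hs
      have hd : DifferentiableWithinAt ℝ φ U (g s) :=
        hφ.differentiableOn (by exact_mod_cast (by omega : n ≠ 0)) (g s) hgU'
      have hda : DifferentiableAt ℝ φ (g s) := hd.differentiableAt (hUo.mem_nhds hgU')
      have hder : HasDerivAt φ (derivWithin φ U (g s)) (g s) := by
        rw [derivWithin_of_isOpen hUo hgU']
        exact hda.hasDerivAt
      exact HasDerivAt.of_local_left_inverse (hgc.continuousAt (hVo.mem_nhds hs)) hder
        (hφ'ne _ hgU') (by filter_upwards [hVo.mem_nhds hs] using hφg)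
    have hgdW : ∀ s ∈ V, derivWithin g V s = (derivWithin φ U (g s))⁻¹ := by
      intro s hs
      rw [derivWithin_of_isOpen hVo hs]
      exact (hgderiv s hs).deriv
    have hgsm : ∀ m : ℕ, m ≤ n → ContDiffOn ℝ m g V := by
      intro m
      induction m with
      | zero => intro _; simpa using hgc
      | succ m IHm =>
        intro hmn
        have hm : ContDiffOn ℝ m g V := IHm (by omega)
        have hum : ContDiffOn ℝ m (fun x => (derivWithin φ U x)⁻¹) U := by
          refine ContDiffOn.inv ?_ hφ'ne
          refine hφ.derivWithin hUuniq ?_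
          exact_mod_cast (by omega : m + 1 ≤ n)
        have hdg : ContDiffOn ℝ m (derivWithin g V) V := by
          refine (hum.comp hm (fun x hx => hgU x hx)).congr ?_
          intro x hx
          exact hgdW x hx
        have hcast : ((m+1 : ℕ) : WithTop ℕ∞) = (m : WithTop ℕ∞) + 1 := by push_cast; rfl
        rw [hcast]
        refine (contDiffOn_succ_iff_derivWithin hVuniq).mpr ⟨?_, ?_, hdg⟩
        · intro x hx
          exact (hgderiv x hx).differentiableAt.differentiableWithinAt
        · intro hω
          exact absurd hω (by simp)
    -- set where φ' lives
    have hWo : IsOpen {x : ℝ | c / 2 < |x|} := isOpen_lt continuous_const continuous_abs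
    have hWuniq : UniqueDiffOn ℝ {x : ℝ | c / 2 < |x|} := hWo.uniqueDiffOn
    have hmapW : Set.MapsTo (derivWithin φ U) U {x : ℝ | c / 2 < |x|} := by
      intro x hx
      have := hφc x hx
      show c / 2 < |derivWithin φ U x|
      linarith
    have hWne : ∀ y ∈ {x : ℝ | c / 2 < |x|}, y ≠ 0 := by
      intro y hy h0
      have : c / 2 < |y| := hy
      rw [h0, abs_zero] at this
      linarith
    have hinvCD : ∀ m : ℕ, ContDiffOn ℝ m Inv.inv {x : ℝ | c / 2 < |x|} := by
      intro m y hy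
      exact (contDiffAt_inv (𝕜 := ℝ) (hWne y hy)).contDiffWithinAt
    have hinvB : ∀ m : ℕ, m ≤ k → ∀ y ∈ {x : ℝ | c / 2 < |x|}, c ≤ |y| →
        ‖iteratedFDerivWithin ℝ m Inv.inv {x : ℝ | c / 2 < |x|} y‖ ≤ Cinv := by
      intro m hmk y hy hcy
      rw [iteratedFDerivWithin_of_isOpen m hWo hy, norm_iteratedFDeriv_eq_norm_iteratedDeriv,
        Real.norm_eq_abs, iteratedDeriv_eq_iterate, iter_deriv_inv, abs_mul]
      have h1 : |∏ i ∈ Finset.range m, (-1 - (i:ℝ))| = (m.factorial : ℝ) := by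
        rw [Finset.abs_prod]
        have heach : ∀ i ∈ Finset.range m, |(-1 - (i:ℝ))| = ((i+1 : ℕ) : ℝ) := by
          intro i _
          rw [abs_of_nonpos (by push_cast; linarith [Nat.cast_nonneg (α := ℝ) i])]
          push_cast; ring
        rw [Finset.prod_congr rfl heach, ← Nat.cast_prod,
          Finset.prod_range_add_one_eq_factorial]
      rw [show |(-1:ℝ) ^ m * (m.factorial:ℝ)| = (m.factorial:ℝ) by
        rw [abs_mul, abs_pow, abs_neg, abs_one, one_pow, one_mul, Nat.abs_cast]]
      have hy0 : (0:ℝ) < |y| := lt_of_lt_of_le hc hcy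
      have h2 : |y ^ (-1 - (m:ℤ))| = (|y| ^ (m+1))⁻¹ := by
        rw [show (-1 - (m:ℤ)) = -((m+1 : ℕ) : ℤ) by push_cast; ring,
          zpow_neg, zpow_natCast, abs_inv, abs_pow]
      rw [h2]
      have h3 : (|y| ^ (m+1))⁻¹ ≤ (max c⁻¹ 1) ^ (k+1) := by
        have hstep1 : (|y| ^ (m+1))⁻¹ ≤ (c ^ (m+1))⁻¹ := by
          apply inv_anti₀ (by positivity)
          exact pow_le_pow_left₀ hc.le hcy _
        have hstep2 : (c ^ (m+1))⁻¹ = (c⁻¹) ^ (m+1) := by rw [inv_pow]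
        have hstep3 : (c⁻¹) ^ (m+1) ≤ (max c⁻¹ 1) ^ (m+1) :=
          pow_le_pow_left₀ (by positivity) (le_max_left _ _) _
        have hstep4 : (max c⁻¹ 1) ^ (m+1) ≤ (max c⁻¹ 1) ^ (k+1) :=
          pow_le_pow_right₀ (le_max_right _ _) (by omega)
        linarith [hstep1, hstep2 ▸ hstep1, hstep3, hstep4]
      have h6 : (m.factorial : ℝ) ≤ (k.factorial : ℝ) := by
        exact_mod_cast Nat.factorial_le hmk
      rw [hCinv]
      exact mul_le_mul h6 h3 (by positivity) (by positivity)
    have hui : ∀ i : ℕ, i ≤ k → ∀ x ∈ U,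
        ‖iteratedFDerivWithin ℝ i (fun x => (derivWithin φ U x)⁻¹) U x‖ ≤ Cu := by
      intro i hik2 x hx
      have hφ'i : ContDiffOn ℝ i (derivWithin φ U) U := by
        refine hφ.derivWithin hUuniq ?_
        exact_mod_cast (by omega : i + 1 ≤ n)
      have hcomp := norm_iteratedFDerivWithin_comp_le (𝕜 := ℝ) (g := Inv.inv)
        (f := derivWithin φ U) (n := i) (N := (i : WithTop ℕ∞))
        (hinvCD i) hφ'i le_rfl hWuniq hUuniq hmapW hx (C := Cinv) (D := M)
        (fun m hmi => hinvB m (le_trans hmi hik2) _ (hmapW hx) (hφc x hx))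
        (by
          intro m h1m hmi
          rw [norm_iteratedFDerivWithin_eq_norm_iteratedDerivWithin, Real.norm_eq_abs,
            ← iteratedDerivWithin_succ']
          calc |iteratedDerivWithin (m+1) φ U x| ≤ M := hφM (m+1) (by omega) (by omega) x hx
            _ ≤ M ^ m := le_self_pow₀ (by linarith) (by omega))
      have hfun : (fun x => (derivWithin φ U x)⁻¹) = Inv.inv ∘ (derivWithin φ U) := rfl
      rw [hfun]
      refine le_trans hcomp ?_
      rw [hCu]
      have hf : (i.factorial : ℝ) ≤ (k.factorial : ℝ) := by
        exact_mod_cast Nat.factorial_le hik2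
      have hMp : M ^ i ≤ M ^ k := pow_le_pow_right₀ (by linarith) hik2
      exact mul_le_mul (mul_le_mul hf le_rfl hCinv_pos.le (by positivity)) hMp
        (by positivity) (by positivity)
    -- outer composition
    have hgU' := hgU s hs
    have hu_k : ContDiffOn ℝ k (fun x => (derivWithin φ U x)⁻¹) U := by
      refine ContDiffOn.inv ?_ hφ'ne
      refine hφ.derivWithin hUuniq ?_
      exact_mod_cast (by omega : k + 1 ≤ n)
    have hg_k : ContDiffOn ℝ k g V := hgsm k (by omega)
    have hDg : ∀ i : ℕ, 1 ≤ i → i ≤ k → ‖iteratedFDerivWithin ℝ i g V s‖ ≤ (C0+1) ^ i := by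
      intro i h1 h2
      rw [norm_iteratedFDerivWithin_eq_norm_iteratedDerivWithin, Real.norm_eq_abs]
      have hb := hIH φ g U V hUo hVo hφ hφM hφc hgU hφg hgc hgM i h2 (by omega) s hs
      calc |iteratedDerivWithin i g V s| ≤ C0 := hb
        _ ≤ C0 + 1 := by linarith
        _ ≤ (C0+1) ^ i := le_self_pow₀ (by linarith) (by omega)
    have hcompO := norm_iteratedFDerivWithin_comp_le (𝕜 := ℝ)
      (g := fun x => (derivWithin φ U x)⁻¹) (f := g) (n := k) (N := (k : WithTop ℕ∞))
      hu_k hg_k le_rfl hUuniq hVuniq (fun x hx => hgU x hx) hs (C := Cu) (D := C0 + 1)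
      (fun i hi => hui i hi (g s) hgU') hDg
    have e1 : iteratedDerivWithin (k+1) g V s = iteratedDerivWithin k (derivWithin g V) V s :=
      congrFun iteratedDerivWithin_succ' s
    have e2 : iteratedDerivWithin k (derivWithin g V) V s
        = iteratedDerivWithin k ((fun x => (derivWithin φ U x)⁻¹) ∘ g) V s :=
      iteratedDerivWithin_congr (fun x hx => hgdW x hx) hs
    refine le_trans ?_ (le_max_right C0 Cfin)
    rw [e1, e2, ← Real.norm_eq_abs, ← norm_iteratedFDerivWithin_eq_norm_iteratedDerivWithin]
    exact le_trans hcompO (le_of_eq hCfin.symm)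

private lemma iteratedDerivWithin_isOpen' {f : ℝ → ℝ} {s : Set ℝ} {x : ℝ} (m : ℕ)
    (hs : IsOpen s) (hx : x ∈ s) : iteratedDerivWithin m f s x = iteratedDeriv m f x := by
  rw [iteratedDerivWithin_eq_iteratedFDerivWithin, iteratedDeriv_eq_iteratedFDeriv,
    iteratedFDerivWithin_of_isOpen m hs hx]

/-- Lemma 2.1 (v): bounds, uniform in `j ≤ -1`, for the derivatives of the inverse
function of `Γ_j'` on the interior of `Γ_j'([1/2,2])`. -/
theorem inverse_derivative_bounds (N : ℕ) (hN : 3 ≤ N) (γ : ℝ → ℝ)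
    (h : CurveHyp γ N) :
    ∀ k : ℕ, k < N → ∃ C : ℝ, 0 < C ∧
      ∀ j : ℤ, j ≤ -1 → ∀ g : ℝ → ℝ,
        (∀ t ∈ Set.Icc (1/2 : ℝ) 2, g (GamDeriv γ j t) = t) →
        ∀ s ∈ interior (GamDeriv γ j '' Set.Icc (1/2 : ℝ) 2),
          |iteratedDerivWithin k g (GamDeriv γ j '' Set.Icc (1/2 : ℝ) 2) s| ≤ C := by
  intro k hk
  obtain ⟨c, M, hc, hM, hne, hjb⟩ := gam_bounds N hN γ h.1 h.2.2.2.1 h.2.2.2.2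
  obtain ⟨C, hCpos, hC⟩ := inv_iter_bound (N-1) c M hc hM k
  refine ⟨C, hCpos, ?_⟩
  intro j hj g hg s hsmem
  have hub := (hjb j hj).1
  have hlb := (hjb j hj).2
  -- smoothness of Gam on [1/2,2] and on (1/4,2)
  have hGamIcc : ContDiffOn ℝ N (Gam γ j) (Set.Icc (1/2:ℝ) 2) :=
    gam_contdiffOn h.1 hj (fun t ht => ⟨by linarith [ht.1], ht.2⟩)
  have hGam2 : ContDiffOn ℝ N (Gam γ j) (Set.Ioo (1/4:ℝ) 2) :=
    gam_contdiffOn h.1 hj (fun t ht => ⟨by linarith [ht.1], ht.2.le⟩)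
  have hφcont : ContinuousOn (GamDeriv γ j) (Set.Icc (1/2:ℝ) 2) := by
    have := hGamIcc.continuousOn_derivWithin (uniqueDiffOn_Icc (by norm_num))
      (by exact_mod_cast Nat.one_le_iff_ne_zero.mpr (by omega))
    exact this
  have hφinj : Set.InjOn (GamDeriv γ j) (Set.Icc (1/2:ℝ) 2) := by
    intro t1 h1 t2 h2 heq
    have e1 := hg t1 h1
    have e2 := hg t2 h2
    rw [heq] at e1
    rw [e2] at e1
    exact e1.symm
  have hmono_or := ContinuousOn.strictMonoOn_of_injOn_Icc' (by norm_num : (1/2:ℝ) ≤ 2)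
    hφcont hφinj
  -- continuity of g on the image
  have hgcontS : ContinuousOn g (GamDeriv γ j '' Set.Icc (1/2:ℝ) 2) := by
    haveI : CompactSpace (Set.Icc (1/2:ℝ) 2) :=
      isCompact_iff_compactSpace.mp isCompact_Icc
    let e : Set.Icc (1/2:ℝ) 2 ≃ (GamDeriv γ j '' Set.Icc (1/2:ℝ) 2) :=
      { toFun := fun t => ⟨GamDeriv γ j t, Set.mem_image_of_mem _ t.2⟩
        invFun := fun s => ⟨g s, by
          obtain ⟨t, ht, hts⟩ := s.2
          rw [← hts, hg t ht]; exact ht⟩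
        left_inv := fun t => Subtype.ext (hg t t.2)
        right_inv := fun s => Subtype.ext (by
          obtain ⟨t, ht, hts⟩ := s.2
          show GamDeriv γ j (g s) = s
          conv_lhs => rw [← hts, hg t ht]
          exact hts) }
    have hecont : Continuous e := Continuous.subtype_mk hφcont.restrict _
    have hsymm := (Continuous.homeoOfEquivCompactToT2 (f := e) hecont).symm.continuous
    rw [continuousOn_iff_continuous_restrict]
    exact continuous_subtype_val.comp hsymm
  -- key: for every point of the interior, g lands in the open interval
  have hkey : ∀ s' ∈ interior (GamDeriv γ j '' Set.Icc (1/2:ℝ) 2),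
      g s' ∈ Set.Ioo (1/2:ℝ) 2 ∧ GamDeriv γ j (g s') = s' := by
    intro s' hs'
    have hs'S : s' ∈ GamDeriv γ j '' Set.Icc (1/2:ℝ) 2 := interior_subset hs'
    obtain ⟨t₀, ht₀, hφt₀⟩ := hs'S
    have hgs : g s' = t₀ := by rw [← hφt₀, hg t₀ ht₀]
    obtain ⟨ε, hε, hball⟩ := Metric.isOpen_iff.mp isOpen_interior s' hs'
    have hup' : s' + ε/2 ∈ GamDeriv γ j '' Set.Icc (1/2:ℝ) 2 := by
      refine interior_subset (hball ?_)
      rw [Metric.mem_ball, Real.dist_eq, show s' + ε/2 - s' = ε/2 by ring,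
        abs_of_pos (by linarith)]
      linarith
    have hdn' : s' - ε/2 ∈ GamDeriv γ j '' Set.Icc (1/2:ℝ) 2 := by
      refine interior_subset (hball ?_)
      rw [Metric.mem_ball, Real.dist_eq, show s' - ε/2 - s' = -(ε/2) by ring, abs_neg,
        abs_of_pos (by linarith)]
      linarith
    have hnotmax : ¬ (∀ s'' ∈ GamDeriv γ j '' Set.Icc (1/2:ℝ) 2, s'' ≤ s') := by
      intro hmax
      have := hmax _ hup'
      linarith
    have hnotmin : ¬ (∀ s'' ∈ GamDeriv γ j '' Set.Icc (1/2:ℝ) 2, s' ≤ s'') := by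
      intro hmin
      have := hmin _ hdn'
      linarith
    have ht₀ne1 : t₀ ≠ 1/2 := by
      intro hh
      rcases hmono_or with mono | anti
      · apply hnotmin
        rintro s'' ⟨t', ht', rfl⟩
        rw [← hφt₀]
        exact mono.monotoneOn ht₀ ht' (by rw [hh]; exact ht'.1)
      · apply hnotmax
        rintro s'' ⟨t', ht', rfl⟩
        rw [← hφt₀]
        exact anti.antitoneOn ht₀ ht' (by rw [hh]; exact ht'.1)
    have ht₀ne2 : t₀ ≠ 2 := by
      intro hh
      rcases hmono_or with mono | anti
      · apply hnotmax
        rintro s'' ⟨t', ht', rfl⟩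
        rw [← hφt₀]
        exact mono.monotoneOn ht' ht₀ (by rw [hh]; exact ht'.2)
      · apply hnotmin
        rintro s'' ⟨t', ht', rfl⟩
        rw [← hφt₀]
        exact anti.antitoneOn ht' ht₀ (by rw [hh]; exact ht'.2)
    refine ⟨?_, ?_⟩
    · rw [hgs]
      exact ⟨lt_of_le_of_ne ht₀.1 (Ne.symm ht₀ne1), lt_of_le_of_ne ht₀.2 ht₀ne2⟩
    · rw [hgs, hφt₀]
  -- identification of GamDeriv with deriv (Gam) on the open interval
  have hEq : Set.EqOn (GamDeriv γ j) (deriv (Gam γ j)) (Set.Ioo (1/2:ℝ) 2) := by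
    intro t ht
    exact derivWithin_of_mem_nhds (Icc_mem_nhds ht.1 ht.2)
  have hN1cast : ((N-1 : ℕ) : WithTop ℕ∞) + 1 ≤ (N : WithTop ℕ∞) := by
    have : ((N-1 : ℕ) : WithTop ℕ∞) + 1 = (((N-1) + 1 : ℕ) : WithTop ℕ∞) := by
      push_cast; rfl
    rw [this]
    exact_mod_cast (by omega : (N-1) + 1 ≤ N)
  have hderivCD : ContDiffOn ℝ (N-1 : ℕ) (deriv (Gam γ j)) (Set.Ioo (1/4:ℝ) 2) :=
    hGam2.deriv_of_isOpen isOpen_Ioo hN1cast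
  have hφU : ContDiffOn ℝ (N-1 : ℕ) (GamDeriv γ j) (Set.Ioo (1/2:ℝ) 2) :=
    (hderivCD.mono (fun t ht => ⟨by linarith [ht.1], ht.2⟩)).congr (fun t ht => hEq ht)
  have hIDW : ∀ m : ℕ, ∀ x ∈ Set.Ioo (1/2:ℝ) 2,
      iteratedDerivWithin m (GamDeriv γ j) (Set.Ioo (1/2:ℝ) 2) x
        = iteratedDeriv (m+1) (Gam γ j) x := by
    intro m x hx
    rw [iteratedDerivWithin_congr hEq hx,
      iteratedDerivWithin_isOpen' m isOpen_Ioo hx, ← iteratedDeriv_succ']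
  have hφMb : ∀ m : ℕ, 1 ≤ m → m ≤ N-1 → ∀ x ∈ Set.Ioo (1/2:ℝ) 2,
      |iteratedDerivWithin m (GamDeriv γ j) (Set.Ioo (1/2:ℝ) 2) x| ≤ M := by
    intro m h1 h2 x hx
    rw [hIDW m x hx]
    exact hub (m+1) (by omega) x hx
  have hφcb : ∀ x ∈ Set.Ioo (1/2:ℝ) 2,
      c ≤ |derivWithin (GamDeriv γ j) (Set.Ioo (1/2:ℝ) 2) x| := by
    intro x hx
    rw [← iteratedDerivWithin_one, hIDW 1 x hx]
    exact hlb x hx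
  have happ := hC (GamDeriv γ j) g (Set.Ioo (1/2:ℝ) 2)
    (interior (GamDeriv γ j '' Set.Icc (1/2:ℝ) 2)) isOpen_Ioo isOpen_interior
    hφU hφMb hφcb (fun s' hs' => (hkey s' hs').1) (fun s' hs' => (hkey s' hs').2)
    (hgcontS.mono interior_subset)
    (by
      intro s' hs'
      have := (hkey s' hs').1
      rw [abs_of_pos (by linarith [this.1])]
      linarith [this.2])
    k le_rfl (by omega) s hsmem
  have hfin : |iteratedDerivWithin k g (GamDeriv γ j '' Set.Icc (1/2:ℝ) 2) s|
      = |iteratedDerivWithin k g (interior (GamDeriv γ j '' Set.Icc (1/2:ℝ) 2)) s| := by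
    rw [← Real.norm_eq_abs, ← Real.norm_eq_abs,
      ← norm_iteratedFDerivWithin_eq_norm_iteratedDerivWithin,
      ← norm_iteratedFDerivWithin_eq_norm_iteratedDerivWithin]
    congr 1
    have hSV : GamDeriv γ j '' Set.Icc (1/2:ℝ) 2
        ∩ interior (GamDeriv γ j '' Set.Icc (1/2:ℝ) 2)
        = interior (GamDeriv γ j '' Set.Icc (1/2:ℝ) 2) :=
      Set.inter_eq_self_of_subset_right interior_subset
    conv_rhs => rw [← hSV]
    exact (iteratedFDerivWithin_inter (isOpen_interior.mem_nhds hsmem)).symm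
  rw [hfin]
  exact happ

end
end
end

section
/- Let q ∈ (1,∞) and let F : ℝ → ℝ be continuously differentiable. Then sup_{u∈[1,2]} |F(u)|^q ≤ |F(1)|^q + q·(∫₁² |F(u)|^q du)^{1/q′}·(∫₁² |F′(u)|^q du)^{1/q}, where q′ is the conjugate exponent of q, i.e. 1/q + 1/q′ = 1. -/
open MeasureTheory Set

noncomputable section

/-- Lemma 2.2: for `q > 1` and `F ∈ C¹(ℝ)`,
`sup_{u∈[1,2]} |F(u)|^q ≤ |F(1)|^q + q (∫₁²|F|^q)^{1/q'} (∫₁²|F'|^q)^{1/q}`. -/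
theorem sup_pow_le_of_C1 (q : ℝ) (hq : 1 < q) (F : ℝ → ℝ) (hF : ContDiff ℝ 1 F) :
    ∀ u ∈ Set.Icc (1 : ℝ) 2,
      |F u| ^ q ≤ |F 1| ^ q +
        q * (∫ v in Set.Icc (1 : ℝ) 2, |F v| ^ q) ^ (1 - 1 / q) *
          (∫ v in Set.Icc (1 : ℝ) 2, |deriv F v| ^ q) ^ (1 / q) := by
  intro u hu
  obtain ⟨hu1, hu2⟩ := hu
  have hq0 : (0:ℝ) < q := by linarith
  have hq1 : q - 1 ≠ 0 := by intro h; linarith [sub_eq_zero.mp h]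
  have hFc : Continuous F := hF.continuous
  have hF'c : Continuous (deriv F) := hF.continuous_deriv le_rfl
  -- the auxiliary continuous function y ↦ |y|^(q-2) * y
  have habs : ∀ t : ℝ, |t| ^ (q-2) * |t| = |t| ^ (q-1) := by
    intro t
    rcases eq_or_ne t 0 with ht | ht
    · simp [ht, Real.zero_rpow hq1]
    · rw [← Real.rpow_add_one (abs_ne_zero.2 ht)]
      congr 1; ring
  have hg : Continuous (fun y : ℝ => |y| ^ (q-2) * y) := by
    rw [continuous_iff_continuousAt]
    intro y
    rcases eq_or_ne y 0 with hy | hy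
    · subst hy
      have h0 : |(0:ℝ)| ^ (q-2) * (0:ℝ) = 0 := by simp
      rw [ContinuousAt, h0]
      have hcont : Continuous fun t : ℝ => |t| ^ (q-1) :=
        (Real.continuous_rpow_const (by linarith)).comp continuous_abs
      have htend : Filter.Tendsto (fun t : ℝ => |t| ^ (q-1)) (nhds 0) (nhds 0) := by
        have := hcont.tendsto 0
        simpa [Real.zero_rpow hq1] using this
      refine squeeze_zero_norm (fun t => ?_) htend
      rw [norm_mul, Real.norm_eq_abs, Real.norm_eq_abs,
        abs_of_nonneg (Real.rpow_nonneg (abs_nonneg t) _)]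
      exact le_of_eq (habs t)
    · exact ((Real.continuousAt_rpow_const |y| (q-2)
        (Or.inl (abs_ne_zero.2 hy))).comp continuous_abs.continuousAt).mul continuousAt_id
  -- derivative of |F|^q
  set G' : ℝ → ℝ := fun v => q * (|F v| ^ (q-2) * F v) * deriv F v with hG'def
  have hG'c : Continuous G' := (continuous_const.mul (hg.comp hFc)).mul hF'c
  have hder : ∀ x, HasDerivAt (fun y => |F y| ^ q) (G' x) x := by
    intro x
    have h1 := hasDerivAt_abs_rpow (F x) hq
    have h2 : HasDerivAt F (deriv F x) x := (hF.differentiable one_ne_zero x).hasDerivAt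
    have h3 := h1.comp x h2
    exact h3.congr_deriv (by show _ = q * (|F x| ^ (q-2) * F x) * deriv F x; ring)
  -- bound function
  set B : ℝ → ℝ := fun v => q * |F v| ^ (q-1) * |deriv F v| with hBdef
  have hBc : Continuous B :=
    (continuous_const.mul ((Real.continuous_rpow_const (by linarith)).comp hFc.abs)).mul hF'c.abs
  have key : ∀ x, |G' x| ≤ B x := by
    intro x
    have : |G' x| = B x := by
      simp only [hG'def, hBdef, abs_mul, abs_of_nonneg hq0.le,
        abs_of_nonneg (Real.rpow_nonneg (abs_nonneg (F x)) _)]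
      rw [mul_assoc q, habs, ← mul_assoc]
    exact this.le
  -- FTC
  have hG'int : IntervalIntegrable G' volume 1 u := hG'c.intervalIntegrable 1 u
  have hFTC : ∫ v in (1:ℝ)..u, G' v = |F u| ^ q - |F 1| ^ q :=
    intervalIntegral.integral_eq_sub_of_hasDerivAt (fun t _ => hder t) hG'int
  have hBnonneg : ∀ x, 0 ≤ B x := fun x => by
    simp only [hBdef]
    positivity
  have step1 : ∫ v in (1:ℝ)..u, G' v ≤ ∫ v in (1:ℝ)..u, B v :=
    intervalIntegral.integral_mono_on hu1 hG'int (hBc.intervalIntegrable 1 u)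
      (fun x _ => (le_abs_self _).trans (key x))
  have step2 : ∫ v in (1:ℝ)..u, B v ≤ ∫ v in Icc (1:ℝ) 2, B v := by
    rw [intervalIntegral.integral_of_le hu1]
    refine setIntegral_mono_set (hBc.integrableOn_Icc) (ae_of_all _ hBnonneg) ?_
    exact HasSubset.Subset.eventuallyLE (fun x hx => ⟨hx.1.le, hx.2.trans hu2⟩)
  -- Hölder
  set μ := volume.restrict (Icc (1:ℝ) 2) with hμ
  have hpq : (q/(q-1)).HolderConjugate q := by
    exact (Real.HolderConjugate.conjExponent hq).symm
  have hfc : Continuous fun v => |F v| ^ (q-1) :=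
    (Real.continuous_rpow_const (by linarith)).comp hFc.abs
  have memf : MemLp (fun v => |F v| ^ (q-1)) (ENNReal.ofReal (q/(q-1))) μ := by
    obtain ⟨C, hC⟩ := (isCompact_Icc (a := (1:ℝ)) (b := 2)).exists_bound_of_continuousOn
      hfc.continuousOn
    exact MemLp.of_bound hfc.aestronglyMeasurable C
      ((ae_restrict_iff' measurableSet_Icc).2 (ae_of_all _ hC))
  have memg : MemLp (fun v => |deriv F v|) (ENNReal.ofReal q) μ := by
    obtain ⟨C, hC⟩ := (isCompact_Icc (a := (1:ℝ)) (b := 2)).exists_bound_of_continuousOn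
      hF'c.abs.continuousOn
    exact MemLp.of_bound hF'c.abs.aestronglyMeasurable C
      ((ae_restrict_iff' measurableSet_Icc).2 (ae_of_all _ hC))
  have holder := integral_mul_le_Lp_mul_Lq_of_nonneg hpq
    (ae_of_all _ fun x => Real.rpow_nonneg (abs_nonneg (F x)) _)
    (ae_of_all _ fun x => abs_nonneg (deriv F x)) memf memg
  have hrw1 : ∀ a : ℝ, (|F a| ^ (q-1)) ^ (q/(q-1)) = |F a| ^ q := by
    intro a
    rw [← Real.rpow_mul (abs_nonneg _)]
    congr 1
    field_simp
  have hrw2 : (1 : ℝ) / (q/(q-1)) = 1 - 1/q := by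
    rw [one_div_div]
    field_simp
  simp only [hrw1, hrw2] at holder
  have hsplit : ∫ v in Icc (1:ℝ) 2, B v
      = q * ∫ a, (|F a| ^ (q-1)) * |deriv F a| ∂μ := by
    rw [← integral_const_mul]
    apply integral_congr_ae
    exact ae_of_all _ fun x => by simp only [hBdef]; ring
  have hfinal : ∫ v in Icc (1:ℝ) 2, B v ≤
      q * (∫ v in Icc (1:ℝ) 2, |F v| ^ q) ^ (1 - 1/q) *
        (∫ v in Icc (1:ℝ) 2, |deriv F v| ^ q) ^ (1/q) := by
    rw [hsplit, mul_assoc]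
    exact mul_le_mul_of_nonneg_left holder hq0.le
  have := hFTC ▸ step1
  linarith [step2, hfinal, le_trans step1 (le_trans step2 hfinal)]

end
end

section
/- Let N ∈ ℕ with N ≥ 2 and let γ satisfy the curve hypotheses with parameter N, and set ω := limsup_{t→0⁺} ln|γ(t)|/ln t. If p, q ∈ [1,∞] satisfy 1/q ≤ 1/p and 1 + (1+ω)(1/q − 1/p) > 0 (with the convention 1/∞ = 0), then the series ∑_{j∈ℤ, j≤0} 2ʲ·|2ʲγ(2ʲ)|^{1/q − 1/p} converges, i.e. ∑_{j≤0} 2ʲ|2ʲγ(2ʲ)|^{1/q−1/p} < ∞. -/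
open MeasureTheory Filter Set
open scoped ENNReal NNReal

noncomputable section

/-- `ω := limsup_{t→0⁺} ln|γ(t)| / ln t`. -/
def curveOmega (γ : ℝ → ℝ) : ℝ :=
  Filter.limsup (fun t => Real.log |γ t| / Real.log t) (nhdsWithin 0 (Set.Ioi 0))

/-- γ does not vanish on (0,1]. -/
lemma curve_ne_zero {γ : ℝ → ℝ} {N : ℕ} (h : CurveHyp γ N) {t : ℝ}
    (ht : t ∈ Set.Ioc (0:ℝ) 1) : γ t ≠ 0 := by
  obtain ⟨C, hC, hCb⟩ := h.2.2.2.1 1 le_rfl (by norm_num)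
  intro h0
  have := hCb t ht
  rw [h0, div_zero, abs_zero] at this
  linarith

/-- lower bound log |γ t| ≥ K + C₂ log t on (0, 1/2]. -/
lemma curve_log_lower {γ : ℝ → ℝ} {N : ℕ} (hN : 2 ≤ N) (h : CurveHyp γ N) :
    ∃ C₂ K : ℝ, 0 < C₂ ∧ ∀ t ∈ Set.Ioc (0:ℝ) (1/2),
      K + C₂ * Real.log t ≤ Real.log |γ t| := by
  obtain ⟨C₂, hC₂pos, hC₂⟩ := h.2.2.2.2 1 le_rfl (by omega)
  -- derivative facts at interior points
  have hderiv : ∀ x ∈ Set.Ioo (0:ℝ) 1,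
      HasDerivAt γ (deriv γ x) x ∧ deriv γ x / γ x ≤ C₂ / x := by
    intro x hx
    have hxS : x ∈ Set.Ioc (0:ℝ) 1 := Ioo_subset_Ioc_self hx
    have hnhds : Set.Ioc (0:ℝ) 1 ∈ nhds x :=
      Filter.mem_of_superset (isOpen_Ioo.mem_nhds hx) Ioo_subset_Ioc_self
    have hca : ContDiffAt ℝ N γ x := h.1.contDiffAt hnhds
    have hdiff : DifferentiableAt ℝ γ x :=
      hca.differentiableAt (by exact_mod_cast (by omega : N ≠ 0))
    have hd : HasDerivAt γ (deriv γ x) x := hdiff.hasDerivAt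
    refine ⟨hd, ?_⟩
    have hIter : iteratedDerivWithin 1 γ (Set.Ioc 0 1) x = deriv γ x := by
      rw [iteratedDerivWithin_one,
        derivWithin_of_mem_nhds hnhds]
    have hb := hC₂ x hxS
    rw [hIter, pow_one] at hb
    have h1 : x * (deriv γ x / γ x) ≤ C₂ := by
      calc x * (deriv γ x / γ x) ≤ |x * (deriv γ x / γ x)| := le_abs_self _
      _ = |x * deriv γ x / γ x| := by rw [mul_div_assoc]
      _ ≤ C₂ := hb
    rw [le_div_iff₀ hx.1]
    rw [mul_comm]; exact h1
  -- F = C₂ log - log ∘ γ is monotone on (0,1)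
  set F : ℝ → ℝ := fun u => C₂ * Real.log u - Real.log (γ u) with hF
  have hFd : ∀ x ∈ Set.Ioo (0:ℝ) 1,
      HasDerivAt F (C₂ * x⁻¹ - deriv γ x / γ x) x := by
    intro x hx
    have hx0 : x ≠ 0 := ne_of_gt hx.1
    have hne : γ x ≠ 0 := curve_ne_zero h (Ioo_subset_Ioc_self hx)
    exact ((Real.hasDerivAt_log hx0).const_mul C₂).sub
      (((hderiv x hx).1).log hne)
  have hmono : MonotoneOn F (Set.Ioo (0:ℝ) 1) := by
    apply monotoneOn_of_deriv_nonneg (convex_Ioo 0 1)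
    · exact fun x hx => (hFd x hx).continuousAt.continuousWithinAt
    · rw [interior_Ioo]
      exact fun x hx => (hFd x hx).differentiableAt.differentiableWithinAt
    · rw [interior_Ioo]
      intro x hx
      rw [(hFd x hx).deriv]
      have := (hderiv x hx).2
      rw [div_eq_mul_inv C₂] at this
      linarith
  refine ⟨C₂, Real.log (γ (1/2)) - C₂ * Real.log (1/2), hC₂pos, ?_⟩
  intro t ht
  have ht1 : t ∈ Set.Ioo (0:ℝ) 1 := ⟨ht.1, lt_of_le_of_lt ht.2 (by norm_num)⟩
  have hhalf : (1/2 : ℝ) ∈ Set.Ioo (0:ℝ) 1 := by norm_num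
  have := hmono ht1 hhalf ht.2
  have hla : Real.log |γ t| = Real.log (γ t) := Real.log_abs _
  rw [hla]
  simp only [hF] at this
  linarith

/-- Lemma 2.3: convergence of `∑_{j ≤ 0} 2ʲ |2ʲ γ(2ʲ)|^{1/q - 1/p}` (the sum over
`j ∈ ℤ`, `j ≤ 0`, written as a sum over `n = -j ∈ ℕ`). -/
theorem sum_dyadic_converges (N : ℕ) (hN : 2 ≤ N) (γ : ℝ → ℝ) (h : CurveHyp γ N)
    (p q : ℝ≥0∞) (hp : 1 ≤ p) (hq : 1 ≤ q)
    (h1 : (q⁻¹).toReal ≤ (p⁻¹).toReal)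
    (h2 : 0 < 1 + (1 + curveOmega γ) * ((q⁻¹).toReal - (p⁻¹).toReal)) :
    Summable (fun n : ℕ =>
      (2 : ℝ) ^ (-(n : ℤ)) *
        |(2 : ℝ) ^ (-(n : ℤ)) * γ ((2 : ℝ) ^ (-(n : ℤ)))| ^
          ((q⁻¹).toReal - (p⁻¹).toReal)) := by
  obtain ⟨C₂, K, hC₂pos, hK⟩ := curve_log_lower hN h
  set σ : ℝ := (q⁻¹).toReal - (p⁻¹).toReal with hσdef
  have hσ : σ ≤ 0 := sub_nonpos.2 h1
  set ω := curveOmega γ with hωdef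
  -- boundedness of log|γ t|/log t near 0+
  have hbd : ∀ᶠ t in nhdsWithin (0:ℝ) (Set.Ioi 0),
      Real.log |γ t| / Real.log t ≤ C₂ + 1 := by
    set δ : ℝ := min (1/2) (Real.exp K) with hδdef
    have hδpos : 0 < δ := lt_min (by norm_num) (Real.exp_pos K)
    have hmem : Set.Ioo (0:ℝ) δ ∈ nhdsWithin (0:ℝ) (Set.Ioi 0) :=
      Ioo_mem_nhdsGT_of_mem ⟨le_refl 0, hδpos⟩
    filter_upwards [hmem] with t ht
    have ht0 : 0 < t := ht.1
    have ht12 : t ≤ 1/2 := le_of_lt (lt_of_lt_of_le ht.2 (min_le_left _ _))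
    have hlogneg : Real.log t < 0 :=
      Real.log_neg ht0 (lt_of_le_of_lt ht12 (by norm_num))
    have hKt : Real.log t ≤ K := by
      have : t < Real.exp K := lt_of_lt_of_le ht.2 (min_le_right _ _)
      exact le_of_lt ((Real.log_lt_iff_lt_exp ht0).2 this)
    have hkey := hK t ⟨ht0, ht12⟩
    rw [div_le_iff_of_neg hlogneg]
    nlinarith
  have hIsBdd : Filter.IsBoundedUnder (· ≤ ·) (nhdsWithin (0:ℝ) (Set.Ioi 0))
      (fun t => Real.log |γ t| / Real.log t) := ⟨C₂ + 1, eventually_map.2 hbd⟩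
  -- choose ε
  set ε : ℝ := (1 + (1 + ω) * σ) / (2 * (1 - σ)) with hεdef
  have hσ1 : 0 < 1 - σ := by linarith
  have hεpos : 0 < ε := div_pos h2 (by linarith)
  have hδ' : 0 < 1 + (1 + ω + ε) * σ := by
    have hεval : ε * (2 * (1 - σ)) = 1 + (1 + ω) * σ := by
      rw [hεdef]; exact div_mul_cancel₀ _ (ne_of_gt (by linarith))
    nlinarith [mul_nonneg hεpos.le (neg_nonneg.2 hσ)]
  have hlimlt : Filter.limsup (fun t => Real.log |γ t| / Real.log t)
      (nhdsWithin (0:ℝ) (Set.Ioi 0)) < ω + ε := by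
    have : Filter.limsup (fun t => Real.log |γ t| / Real.log t)
        (nhdsWithin (0:ℝ) (Set.Ioi 0)) = ω := rfl
    rw [this]; linarith
  have hev : ∀ᶠ t in nhdsWithin (0:ℝ) (Set.Ioi 0),
      Real.log |γ t| / Real.log t < ω + ε :=
    eventually_lt_of_limsup_lt hlimlt hIsBdd
  -- the dyadic sequence tends to 0+
  have h2n : ∀ n : ℕ, (2:ℝ) ^ (-(n:ℤ)) = (2⁻¹:ℝ) ^ n := by
    intro n; rw [zpow_neg, zpow_natCast, inv_pow]
  have tseq : Filter.Tendsto (fun n : ℕ => (2:ℝ) ^ (-(n:ℤ))) Filter.atTop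
      (nhdsWithin (0:ℝ) (Set.Ioi 0)) := by
    rw [tendsto_nhdsWithin_iff]
    constructor
    · simp only [h2n]
      exact tendsto_pow_atTop_nhds_zero_of_lt_one (by norm_num) (by norm_num)
    · exact Filter.Eventually.of_forall fun n => Set.mem_Ioi.2 (by positivity)
  have hmemIoo : Set.Ioo (0:ℝ) (1/2) ∈ nhdsWithin (0:ℝ) (Set.Ioi 0) :=
    Ioo_mem_nhdsGT_of_mem ⟨le_refl 0, by norm_num⟩
  have hevn := (tseq.eventually hev).and (tseq.eventually hmemIoo)
  rw [Filter.eventually_atTop] at hevn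
  obtain ⟨M, hM⟩ := hevn
  -- geometric comparison
  set δ' : ℝ := 1 + (1 + ω + ε) * σ with hδ'def
  set x : ℝ := (2⁻¹:ℝ) ^ δ' with hxdef
  have hx0 : 0 < x := Real.rpow_pos_of_pos (by norm_num) _
  have hx1 : x < 1 := Real.rpow_lt_one (by norm_num) (by norm_num) hδ'
  set f : ℕ → ℝ := fun n => (2 : ℝ) ^ (-(n : ℤ)) *
      |(2 : ℝ) ^ (-(n : ℤ)) * γ ((2 : ℝ) ^ (-(n : ℤ)))| ^ σ with hfdef
  have hf0 : ∀ n, 0 ≤ f n := by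
    intro n
    apply mul_nonneg (by positivity) (Real.rpow_nonneg (abs_nonneg _) _)
  have hfle : ∀ n, M ≤ n → f n ≤ x ^ n := by
    intro n hn
    obtain ⟨hrlt, hIoo⟩ := hM n hn
    set t : ℝ := (2:ℝ) ^ (-(n:ℤ)) with htdef
    have ht0 : 0 < t := hIoo.1
    have htS : t ∈ Set.Ioc (0:ℝ) 1 :=
      ⟨ht0, le_of_lt (lt_of_lt_of_le hIoo.2 (by norm_num))⟩
    have hγne : γ t ≠ 0 := curve_ne_zero h htS
    have habs : 0 < |γ t| := abs_pos.2 hγne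
    have hlogneg : Real.log t < 0 :=
      Real.log_neg ht0 (lt_of_lt_of_le hIoo.2 (by norm_num))
    have step1 : (ω + ε) * Real.log t < Real.log |γ t| :=
      (div_lt_iff_of_neg hlogneg).1 hrlt
    have step2 : t ^ (ω + ε) < |γ t| := by
      rw [Real.rpow_def_of_pos ht0, ← Real.exp_log habs]
      exact Real.exp_lt_exp.2 (by linarith)
    have step3 : t ^ (1 + ω + ε) < t * |γ t| := by
      have : (1 + ω + ε : ℝ) = 1 + (ω + ε) := by ring
      rw [this, Real.rpow_add ht0, Real.rpow_one]
      exact mul_lt_mul_of_pos_left step2 ht0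
    have step4 : |t * γ t| = t * |γ t| := by
      rw [abs_mul, abs_of_pos ht0]
    have step5 : |t * γ t| ^ σ ≤ (t ^ (1 + ω + ε)) ^ σ := by
      apply Real.rpow_le_rpow_of_nonpos (Real.rpow_pos_of_pos ht0 _) _ hσ
      rw [step4]; exact step3.le
    have step6 : (t ^ (1 + ω + ε)) ^ σ = t ^ ((1 + ω + ε) * σ) :=
      (Real.rpow_mul ht0.le _ _).symm
    have step7 : f n ≤ t ^ δ' := by
      have : f n = t * |t * γ t| ^ σ := rfl
      rw [this, hδ'def]
      calc t * |t * γ t| ^ σ ≤ t * t ^ ((1 + ω + ε) * σ) := by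
            apply mul_le_mul_of_nonneg_left _ ht0.le
            rw [← step6]; exact step5
        _ = t ^ (1 + (1 + ω + ε) * σ) := by
            rw [Real.rpow_add ht0, Real.rpow_one]
        _ = t ^ (1 + (1 + ω + ε) * σ) := rfl
    have step8 : t ^ δ' = x ^ n := by
      rw [htdef, h2n n, hxdef, ← Real.rpow_natCast (2⁻¹:ℝ) n,
        ← Real.rpow_mul (by norm_num), mul_comm,
        Real.rpow_mul (by norm_num), Real.rpow_natCast]
    rw [← step8]; exact step7
  -- conclude
  rw [← summable_nat_add_iff M]
  apply Summable.of_nonneg_of_le (fun n => hf0 _)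
    (fun n => hfle (n + M) (Nat.le_add_left M n))
  have : (fun n : ℕ => x ^ (n + M)) = fun n : ℕ => x ^ n * x ^ M := by
    funext n; rw [pow_add]
  rw [this]
  exact (summable_geometric_of_lt_one hx0.le hx1).mul_right _


end
end
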